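/- Let L ⊆ {1,…,n} and j ∉ L, and suppose ζ^{L∪{j}}_j > 0. Writing w = ζ^{L∪{j}}, one has f(L∪{j}) = Σ_{i ∈ L} μ_i w_i − (1/2) Σ_{i, i' ∈ L} K_{i i'} w_i w_{i'} + (1/(2K_{jj})) · (μ_j − Σ_{i ∈ L} K_{j i} w_i)², i.e. the value of f(L∪{j}) equals the objective l_j of the reformulated constrained problem of Corollary 4.6 evaluated at the restriction of ζ^{L∪{j}} to the coordinates in L. -/

import Mathlib

open Finset Matrix

noncomputable section

/-- The objective `l(w) = ⟨μ, w⟩ - (1/2) ⟨w, K w⟩`. -/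
def obj {n : ℕ} (K : Matrix (Fin n) (Fin n) ℝ) (μ : Fin n → ℝ) (w : Fin n → ℝ) : ℝ :=
  μ ⬝ᵥ w - (1 / 2) * (w ⬝ᵥ (K *ᵥ w))

/-- The feasible set `Ω_L = {w : w ≥ 0, w_j = 0 for j ∉ L}`. -/
def feas {n : ℕ} (L : Finset (Fin n)) : Set (Fin n → ℝ) :=
  {w | (∀ j, 0 ≤ w j) ∧ ∀ j ∉ L, w j = 0}
/-- Value of `f(L∪{j})` as the reformulated objective `l_j` of Corollary 4.6 evaluated at
the restriction of `ζ^{L∪{j}}` to the coordinates in `L`. -/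
theorem f_insert_reformulation (n : ℕ) (hn : 1 ≤ n)
    (K : Matrix (Fin n) (Fin n) ℝ) (hsymm : K.IsSymm) (hpd : K.PosDef)
    (μ : Fin n → ℝ)
    (ζ : Finset (Fin n) → Fin n → ℝ)
    (hζ : ∀ L : Finset (Fin n),
      ζ L ∈ feas L ∧ ∀ w ∈ feas L, obj K μ w ≤ obj K μ (ζ L))
    (f : Finset (Fin n) → ℝ) (hf : ∀ L : Finset (Fin n), f L = obj K μ (ζ L))
    (L : Finset (Fin n)) (j : Fin n) (hj : j ∉ L)
    (hpos : 0 < ζ (insert j L) j) :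
    f (insert j L) =
      (∑ i ∈ L, μ i * ζ (insert j L) i)
        - (1 / 2) * ∑ i ∈ L, ∑ i' ∈ L, K i i' * ζ (insert j L) i * ζ (insert j L) i'
        + (1 / (2 * K j j)) * (μ j - ∑ i ∈ L, K j i * ζ (insert j L) i) ^ 2 := by
  obtain ⟨⟨hw0, hwsupp⟩, hmax⟩ := hζ (insert j L)
  rw [hf (insert j L)]
  set I : Finset (Fin n) := insert j L with hI
  set w : Fin n → ℝ := ζ I with hw
  have hKjj : 0 < K j j := by
    have := hpd.dotProduct_mulVec_pos (x := Pi.single j 1) (by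
      intro hc
      have := congrFun hc j
      simp at this)
    simpa using this
  have hKne : K j j ≠ 0 := ne_of_gt hKjj
  -- symmetry of the quadratic form
  have hsymm' : ∀ u v : Fin n → ℝ, u ⬝ᵥ (K *ᵥ v) = v ⬝ᵥ (K *ᵥ u) := by
    intro u v
    rw [dotProduct_mulVec]
    conv_lhs => rw [← hsymm]
    rw [vecMul_transpose, dotProduct_comm]
  -- expansion of the objective along the j-th coordinate direction
  have expand : ∀ t : ℝ, obj K μ (w + Pi.single j t) =
      obj K μ w + t * (μ j - (K *ᵥ w) j) - t ^ 2 * K j j / 2 := by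
    intro t
    have h1 : μ ⬝ᵥ (w + Pi.single j t) = μ ⬝ᵥ w + μ j * t := by
      rw [dotProduct_add, dotProduct_single]
    have h2 : (w + Pi.single j t) ⬝ᵥ (K *ᵥ (w + Pi.single j t)) =
        w ⬝ᵥ (K *ᵥ w) + 2 * t * (K *ᵥ w) j + t ^ 2 * K j j := by
      rw [mulVec_add, dotProduct_add, add_dotProduct, add_dotProduct,
        hsymm' w (Pi.single j t), single_dotProduct, single_dotProduct]
      simp only [mulVec_single]
      simp only [Pi.smul_apply, col_apply, op_smul_eq_mul]
      ring
    simp only [obj, h1, h2]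
    ring
  -- stationarity in coordinate j
  have key : μ j = (K *ᵥ w) j := by
    by_contra hne
    set a : ℝ := μ j - (K *ᵥ w) j with ha
    have ha0 : a ≠ 0 := sub_ne_zero.mpr hne
    have habs : 0 < |a| := abs_pos.mpr ha0
    set ε : ℝ := min (w j) (|a| / K j j) with hε
    have hε0 : 0 < ε := lt_min hpos (by positivity)
    have hεle : ε * K j j ≤ |a| := (le_div_iff₀ hKjj).mp (min_le_right _ _)
    have hεw : ε ≤ w j := min_le_left _ _
    set t : ℝ := if 0 < a then ε else -ε with ht
    have htabs : t = ε ∨ t = -ε := by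
      rw [ht]; split_ifs <;> simp
    have hfeas : (w + Pi.single j t) ∈ feas I := by
      constructor
      · intro i
        by_cases hi : i = j
        · subst hi
          simp only [Pi.add_apply, Pi.single_eq_same]
          rcases htabs with h | h <;> rw [h] <;> linarith
        · simp [Pi.single_eq_of_ne hi, hw0 i]
      · intro i hi
        have hij : i ≠ j := by
          intro hc; subst hc; exact hi (Finset.mem_insert_self i L)
        simp [Pi.single_eq_of_ne hij, hwsupp i hi]
    have hle := hmax _ hfeas
    rw [expand t] at hle
    have hta : t * a = ε * |a| := by
      rcases lt_trichotomy a 0 with h | h | h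
      · rw [ht, if_neg (by linarith), abs_of_neg h]; ring
      · exact absurd h ha0
      · rw [ht, if_pos h, abs_of_pos h]
    have ht2 : t ^ 2 = ε ^ 2 := by
      rcases htabs with h | h <;> rw [h] <;> ring
    rw [hta, ht2] at hle
    nlinarith [mul_pos hε0 habs, mul_le_mul_of_nonneg_left hεle (le_of_lt hε0)]
  -- restrict the dot products to the support
  have hmu : μ ⬝ᵥ w = (∑ i ∈ L, μ i * w i) + μ j * w j := by
    rw [dotProduct]
    rw [← Finset.sum_subset (Finset.subset_univ I) (fun i _ hi => by
      rw [hwsupp i hi, mul_zero])]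
    rw [hI, Finset.sum_insert hj]
    ring
  have hKwj : (K *ᵥ w) j = (∑ i ∈ L, K j i * w i) + K j j * w j := by
    rw [mulVec, dotProduct]
    rw [← Finset.sum_subset (Finset.subset_univ I) (fun i _ hi => by
      rw [hwsupp i hi, mul_zero])]
    rw [hI, Finset.sum_insert hj]
    ring
  have hrow : ∀ i : Fin n, w i * (K *ᵥ w) i
      = (∑ i' ∈ L, K i i' * w i * w i') + w i * K i j * w j := by
    intro i
    rw [mulVec, dotProduct]
    rw [← Finset.sum_subset (Finset.subset_univ I) (fun i' _ hi' => by
      rw [hwsupp i' hi', mul_zero])]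
    rw [hI, Finset.sum_insert hj, mul_add, Finset.mul_sum]
    rw [add_comm]
    congr 1
    · exact Finset.sum_congr rfl (fun i' _ => by ring)
    · ring
  have hquad : w ⬝ᵥ (K *ᵥ w) =
      (∑ i ∈ L, ∑ i' ∈ L, K i i' * w i * w i')
        + 2 * (∑ i ∈ L, K j i * w i) * w j + K j j * w j * w j := by
    rw [dotProduct]
    rw [← Finset.sum_subset (Finset.subset_univ I) (fun i _ hi => by
      rw [hwsupp i hi, zero_mul])]
    rw [hI, Finset.sum_insert hj]
    simp only [hrow]
    rw [Finset.sum_add_distrib]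
    have hc1 : ∑ i ∈ L, w i * K i j * w j = (∑ i ∈ L, K j i * w i) * w j := by
      rw [Finset.sum_mul]
      exact Finset.sum_congr rfl (fun i _ => by rw [hsymm.apply j i]; ring)
    have hc2 : ∑ i' ∈ L, K j i' * w j * w i' = (∑ i ∈ L, K j i * w i) * w j := by
      rw [Finset.sum_mul]
      exact Finset.sum_congr rfl (fun i _ => by ring)
    rw [hc1, hc2]
    ring
  -- put it all together
  have hmj : μ j = (∑ i ∈ L, K j i * w i) + K j j * w j := by
    rw [key, hKwj]
  rw [obj, hmu, hquad, hmj]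
  field_simp
  ring
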